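/- Let K be a simplicial complex on a finite set V, and suppose the squarefree monomial ideal I_K ⊆ ℚ[v_i : i ∈ V] (the Stanley–Reisner ideal) is generated by monomials corresponding to pairwise disjoint missing faces V_1, ..., V_p. Then the face ring ℚ[K] = ℚ[v_i : i ∈ V]/I_K is a complete intersection ring: I_K is generated by a regular sequence. -/

import Mathlib

open MvPolynomial

/-- `K` is an (abstract) simplicial complex on the vertex type `V`. -/
def IsSimplicialComplex {V : Type*} (K : Set (Finset V)) : Prop :=
  ∅ ∈ K ∧ ∀ σ ∈ K, ∀ τ ⊆ σ, τ ∈ K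

/-- `I` is a missing face (minimal non-face) of `K`. -/
def IsMissingFace {V : Type*} (K : Set (Finset V)) (I : Finset V) : Prop :=
  I ∉ K ∧ ∀ J ⊂ I, J ∈ K

/-- The Stanley–Reisner ideal of `K` over `ℚ`, generated by the squarefree monomials
of non-faces of `K`. -/
noncomputable def SRIdeal {V : Type*} [DecidableEq V] (K : Set (Finset V)) : Ideal (MvPolynomial V ℚ) :=
  Ideal.span {x | ∃ J : Finset V, J ∉ K ∧ x = ∏ i ∈ J, X i}

lemma prod_X_eq_monomial' {V : Type*} [DecidableEq V] (s : Finset V) :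
    (∏ i ∈ s, X i : MvPolynomial V ℚ) = monomial (∑ i ∈ s, Finsupp.single i 1) 1 := by
  classical
  induction s using Finset.induction with
  | empty => simp [monomial_zero']
  | insert _ _ h ih =>
    rw [Finset.prod_insert h, Finset.sum_insert h, ih, X, monomial_mul, one_mul]

lemma sum_single_apply {V : Type*} [DecidableEq V] (s : Finset V) (i : V) :
    (∑ j ∈ s, Finsupp.single j (1 : ℕ)) i = if i ∈ s then 1 else 0 := by
  classical
  simp [Finsupp.finset_sum_apply, Finsupp.single_apply]

/-- If the Stanley–Reisner ideal of `K` is generated by the monomials of pairwise disjoint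
missing faces `W 1, …, W p`, then `ℚ[K]` is a complete intersection ring: the
Stanley–Reisner ideal is generated by a regular sequence. -/
theorem stmt3 {V : Type*} [Fintype V] [DecidableEq V]
    (K : Set (Finset V)) (hK : IsSimplicialComplex K)
    (p : ℕ) (W : Fin p → Finset V)
    (hmf : ∀ k, IsMissingFace K (W k))
    (hdisj : ∀ k l, k ≠ l → Disjoint (W k) (W l))
    (hgen : SRIdeal K = Ideal.span (Set.range fun k => ∏ i ∈ W k, (X i : MvPolynomial V ℚ))) :
    ∃ (q : ℕ) (t : Fin q → MvPolynomial V ℚ),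
      (∀ k : Fin q,
        Ideal.Quotient.mk (Ideal.span (t '' {j | j < k})) (t k) ∈
          nonZeroDivisors (MvPolynomial V ℚ ⧸ Ideal.span (t '' {j | j < k}))) ∧
      Ideal.span (Set.range t) = SRIdeal K := by
  classical
  set d : Fin p → (V →₀ ℕ) := fun k => ∑ i ∈ W k, Finsupp.single i 1 with hd
  refine ⟨p, fun k => ∏ i ∈ W k, X i, fun k => ?_, hgen.symm⟩
  set t : Fin p → MvPolynomial V ℚ := fun k => ∏ i ∈ W k, X i with htdef
  have ht : ∀ k, t k = monomial (d k) 1 := fun k => prod_X_eq_monomial' (W k)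
  have himg : t '' {j | j < k} = (fun s => monomial s (1 : ℚ)) '' (d '' {j | j < k}) := by
    rw [Set.image_image]
    exact Set.image_congr fun j _ => ht j
  rw [himg]
  rw [mem_nonZeroDivisors_iff_right]
  intro x hx
  obtain ⟨f, rfl⟩ := Ideal.Quotient.mk_surjective x
  rw [← map_mul, Ideal.Quotient.eq_zero_iff_mem] at hx
  rw [Ideal.Quotient.eq_zero_iff_mem]
  rw [mem_ideal_span_monomial_image] at hx ⊢
  intro μ hμ
  have hcoeff : coeff (μ + d k) (f * t k) = coeff μ f := by
    rw [ht k, coeff_mul_monomial, mul_one]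
  have hmem : μ + d k ∈ (f * t k).support := by
    rw [mem_support_iff, hcoeff]
    exact mem_support_iff.mp hμ
  obtain ⟨si, hsi, hle⟩ := hx _ hmem
  obtain ⟨j, hj, rfl⟩ := hsi
  refine ⟨d j, ⟨j, hj, rfl⟩, ?_⟩
  intro i
  have hji : d j i ≤ μ i + d k i := hle i
  have hdj : d j i = if i ∈ W j then 1 else 0 := sum_single_apply _ _
  have hdk : d k i = if i ∈ W k then 1 else 0 := sum_single_apply _ _
  by_cases hij : i ∈ W j
  · have hne : j ≠ k := fun h => absurd (h ▸ hj) (lt_irrefl k)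
    have hik : i ∉ W k := Finset.disjoint_left.mp (hdisj j k hne) hij
    rw [hdk, if_neg hik, add_zero] at hji
    exact hji
  · rw [hdj, if_neg hij]; exact Nat.zero_le _
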